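/- Let (G,f) = der_θ(G,·) with θ^(n-1) = id, and let Z*(G) = {a ∈ Z(G,·) : a·θ(a)···θ^(n-1)(a) = a}. Then Z*(G) is a subgroup of (G,·), and the map q : Aut(G,f) → Aut(G,·) sending ψ = R_a φ to φ is a group homomorphism with kernel isomorphic to Z*(G); hence Aut(G,f)/Z*(G) embeds into Aut(G,·). -/

import Mathlib

/-- The `(θ,b)`-derived `n`-ary operation on a group `G`. -/
def derOp {G : Type*} [Group G] (n : ℕ) (θ : MulAut G) (b : G) (x : Fin n → G) : G :=
  (List.ofFn fun i : Fin n => (θ ^ (i : ℕ)) (x i)).prod * b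

/-- The automorphism group of an `n`-ary groupoid `(G,f)`, as a subgroup of
the permutation group of `G`. -/
def nAryAut {G : Type*} [Group G] (n : ℕ) (f : (Fin n → G) → G) :
    Subgroup (Equiv.Perm G) where
  carrier := {ψ | ∀ x : Fin n → G, ψ (f x) = f (fun i => ψ (x i))}
  one_mem' := by intro x; simp
  mul_mem' := by
    intro ψ χ hψ hχ x
    simp only [Equiv.Perm.mul_apply, Set.mem_setOf_eq] at *
    rw [hχ, hψ]
  inv_mem' := by
    intro ψ hψ x
    apply ψ.injective
    rw [Equiv.Perm.coe_inv, Equiv.apply_symm_apply, hψ]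
    congr 1
    funext i
    rw [Equiv.apply_symm_apply]

section auxAQE

lemma ofFn_prod_eq_single {M : Type*} [Monoid M] : ∀ {p : ℕ} (g : Fin p → M) (j : Fin p),
    (∀ i, i ≠ j → g i = 1) → (List.ofFn g).prod = g j := by
  intro p
  induction p with
  | zero => exact fun g j => j.elim0
  | succ p ih =>
    intro g j h
    rw [List.ofFn_succ, List.prod_cons]
    rcases eq_or_ne j 0 with rfl | hj
    · have h1 : (List.ofFn fun i : Fin p => g i.succ) = List.ofFn (fun _ : Fin p => (1 : M)) := by
        congr 1; funext i; exact h _ (Fin.succ_ne_zero i)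
      rw [h1]
      simp
    · obtain ⟨j', rfl⟩ := Fin.exists_succ_eq.mpr hj
      rw [h 0 (by simpa using (Fin.succ_ne_zero j').symm), one_mul]
      exact ih _ j' fun i hi => h _ (by simpa [Fin.succ_inj] using hi)

lemma ofFn_prod_mul_central {G : Type*} [Group G] : ∀ {p : ℕ} (u v : Fin p → G),
    (∀ i, v i ∈ Subgroup.center G) →
    (List.ofFn fun i => u i * v i).prod = (List.ofFn u).prod * (List.ofFn v).prod := by
  intro p
  induction p with
  | zero => simp
  | succ p ih =>
    intro u v hv
    rw [List.ofFn_succ, List.ofFn_succ (f := u), List.ofFn_succ (f := v),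
      List.prod_cons, List.prod_cons, List.prod_cons,
      ih (fun i => u i.succ) (fun i => v i.succ) (fun i => hv _)]
    have := (Subgroup.mem_center_iff.mp (hv 0))
    simp only [mul_assoc]
    congr 1
    rw [← this, mul_assoc, this]

section main
variable {G : Type*} [Group G]

lemma derOp_split (k : ℕ) (θ : MulAut G) (g : Fin (k+2) → G) :
    derOp (k+2) θ 1 g
      = g 0 * (List.ofFn fun i : Fin (k+1) => (θ ^ ((i : ℕ)+1)) (g i.succ)).prod := by
  rw [derOp, List.ofFn_succ, List.prod_cons, mul_one]
  simp [Fin.val_succ]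

lemma caux_star (k : ℕ) (θ : MulAut G) (Ψ : Equiv.Perm G)
    (hΨ : ∀ x : Fin (k+2) → G, Ψ (derOp (k+2) θ 1 x) = derOp (k+2) θ 1 fun i => Ψ (x i)) :
    (List.ofFn fun i : Fin (k+1) => (θ ^ ((i : ℕ)+1)) (Ψ 1)).prod = 1 := by
  have h1 := hΨ (fun _ => 1)
  rw [derOp_split, derOp_split] at h1
  simp only [map_one] at h1
  simp only [List.ofFn_const, List.prod_replicate, one_pow, mul_one] at h1
  exact (left_eq_mul.mp h1)


lemma caux_split (k : ℕ) (θ : MulAut G) (hθ : θ ^ (k+1) = 1) (a : G) :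
    (List.ofFn fun i : Fin (k+1) => (θ ^ ((i : ℕ)+1)) a).prod
      = (List.ofFn fun i : Fin k => (θ ^ ((i : ℕ)+1)) a).prod * a := by
  have hlast : (θ ^ (((Fin.last k : Fin (k+1)) : ℕ)+1)) a = a := by
    rw [Fin.val_last, hθ]; rfl
  rw [List.ofFn_succ', List.prod_concat, hlast]
  refine congrArg (· * a) (congrArg List.prod (congrArg List.ofFn (funext fun i => ?_)))
  rw [Fin.coe_castSucc]

lemma key_mul (k : ℕ) (θ : MulAut G) (hθ : θ ^ (k+1) = 1) (Ψ : Equiv.Perm G)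
    (hΨ : ∀ x : Fin (k+2) → G, Ψ (derOp (k+2) θ 1 x) = derOp (k+2) θ 1 fun i => Ψ (x i))
    (x y : G) : Ψ (x * y) = Ψ x * (Ψ 1)⁻¹ * Ψ y := by
  have hθ' : ∀ z : G, (θ ^ (k+1)) z = z := fun z => by rw [hθ]; rfl
  set t : Fin (k+2) → G := fun i => if i = 0 then x else if i = Fin.last (k+1) then y else 1
    with ht_def
  have hlast0 : (Fin.last (k+1)) ≠ (0 : Fin (k+2)) := by
    simp [Fin.ext_iff]
  have hne : ∀ i : Fin (k+1), i ≠ Fin.last k → i.succ ≠ Fin.last (k+1) := by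
    intro i hi
    have hik : (i : ℕ) ≠ k := by simpa [Fin.ext_iff, Fin.val_last] using hi
    simp only [ne_eq, Fin.ext_iff, Fin.val_succ, Fin.val_last]
    omega
  have ht : derOp (k+2) θ 1 t = x * y := by
    rw [derOp_split]
    have h0 : t 0 = x := by simp [ht_def]
    have hprod : (List.ofFn fun i : Fin (k+1) => (θ ^ ((i : ℕ)+1)) (t i.succ)).prod = y := by
      rw [ofFn_prod_eq_single _ (Fin.last k) ?_]
      · rw [Fin.succ_last]
        simp [ht_def, hlast0, Fin.val_last, hθ']
      · intro i hi
        have h1 : i.succ ≠ (0 : Fin (k+2)) := Fin.succ_ne_zero i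
        simp [ht_def, h1, hne i hi]
    rw [h0, hprod]
  have h2 := hΨ t
  rw [ht, derOp_split] at h2
  have hinner : (List.ofFn fun i : Fin (k+1) => (θ ^ ((i : ℕ)+1)) (Ψ (t i.succ))).prod
      = (List.ofFn fun i : Fin k => (θ ^ ((i : ℕ)+1)) (Ψ 1)).prod * Ψ y := by
    rw [List.ofFn_succ', List.prod_concat]
    have hl : (θ ^ (((Fin.last k : Fin (k+1)) : ℕ)+1)) (Ψ (t (Fin.last k).succ)) = Ψ y := by
      rw [Fin.succ_last]
      simp [ht_def, hlast0, Fin.val_last, hθ']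
    rw [hl]
    refine congrArg (· * Ψ y) (congrArg List.prod (congrArg List.ofFn (funext fun i => ?_)))
    have h1 : (i.castSucc).succ ≠ (0 : Fin (k+2)) := Fin.succ_ne_zero _
    have h2 : (i.castSucc).succ ≠ Fin.last (k+1) := by
      exact hne _ (Fin.castSucc_lt_last i).ne
    simp [ht_def, h1, h2, Fin.coe_castSucc]
  have hC := caux_star k θ Ψ hΨ
  rw [caux_split k θ hθ] at hC
  have hD : (List.ofFn fun i : Fin k => (θ ^ ((i : ℕ)+1)) (Ψ 1)).prod = (Ψ 1)⁻¹ :=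
    eq_inv_of_mul_eq_one_left hC
  have h0 : t 0 = x := by simp [ht_def]
  rw [hinner, hD, h0] at h2
  rw [h2, mul_assoc]


lemma key_central (k : ℕ) (θ : MulAut G) (Ψ : Equiv.Perm G)
    (hΨ : ∀ x : Fin (k+2) → G, Ψ (derOp (k+2) θ 1 x) = derOp (k+2) θ 1 fun i => Ψ (x i))
    (a : G) (hR : ∀ z : G, Ψ z = z * a) : a ∈ Subgroup.center G := by
  rw [Subgroup.mem_center_iff]
  suffices h : ∀ x : G, θ x * a = a * θ x by
    intro g
    simpa using h (θ.symm g)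
  intro x
  set s : Fin (k+2) → G := fun i => if i = 1 then x else 1 with hs_def
  have h01 : (0 : Fin (k+2)) ≠ 1 := by
    simp [Fin.ext_iff]
  have hs : derOp (k+2) θ 1 s = θ x := by
    rw [derOp_split]
    have h0 : s 0 = 1 := by simp [hs_def, h01]
    rw [h0, one_mul]
    rw [ofFn_prod_eq_single _ (0 : Fin (k+1)) ?_]
    · simp [hs_def, Fin.succ_zero_eq_one]
    · intro i hi
      have h1 : i.succ ≠ (1 : Fin (k+2)) := by
        rw [← Fin.succ_zero_eq_one, ne_eq, Fin.succ_inj]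
        exact hi
      simp [hs_def, h1]
  have hC := caux_star k θ Ψ hΨ
  rw [hR 1, one_mul] at hC
  rw [List.ofFn_succ, List.prod_cons] at hC
  have h2 := hΨ s
  rw [hs, hR (θ x), derOp_split] at h2
  have hinner : (List.ofFn fun i : Fin (k+1) => (θ ^ ((i : ℕ)+1)) (Ψ (s i.succ))).prod
      = θ x := by
    rw [List.ofFn_succ, List.prod_cons]
    have hhead : (θ ^ (((0 : Fin (k+1)) : ℕ)+1)) (Ψ (s (0 : Fin (k+1)).succ)) = θ x * θ a := by
      rw [Fin.succ_zero_eq_one]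
      have : s (1 : Fin (k+2)) = x := by simp [hs_def]
      rw [hR, this]
      simp
    have htail : (List.ofFn fun i : Fin k => (θ ^ (((i.succ : Fin (k+1)) : ℕ)+1)) (Ψ (s i.succ.succ))).prod
        = (List.ofFn fun i : Fin k => (θ ^ (((i.succ : Fin (k+1)) : ℕ)+1)) a).prod := by
      refine congrArg List.prod (congrArg List.ofFn (funext fun i => ?_))
      have h1 : (i.succ).succ ≠ (1 : Fin (k+2)) := by
        rw [← Fin.succ_zero_eq_one, ne_eq, Fin.succ_inj]
        exact Fin.succ_ne_zero i
      rw [hR]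
      simp [hs_def, h1]
    rw [hhead, htail, mul_assoc]
    have : (θ ^ (((0 : Fin (k+1)) : ℕ)+1)) a
        * (List.ofFn fun i : Fin k => (θ ^ (((i.succ : Fin (k+1)) : ℕ)+1)) a).prod = 1 := hC
    have h3 : θ a * (List.ofFn fun i : Fin k => (θ ^ (((i.succ : Fin (k+1)) : ℕ)+1)) a).prod = 1 := by
      simpa using this
    rw [h3, mul_one]
  rw [hinner] at h2
  have h0 : s 0 = 1 := by simp [hs_def, h01]
  rw [hR, h0, one_mul] at h2
  exact h2

end main
end auxAQE

theorem aut_quotient_embeds {G : Type*} [Group G] (n : ℕ) (hn : 2 ≤ n)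
    (θ : MulAut G) (hθ : θ ^ (n - 1) = 1) :
    ∃ S : Subgroup G,
      (∀ a : G, a ∈ S ↔ a ∈ Subgroup.center G ∧ derOp n θ 1 (fun _ : Fin n => a) = a) ∧
      ∃ q : nAryAut n (derOp n θ 1) →* MulAut G,
        (∀ (ψ : nAryAut n (derOp n θ 1)) (φ : MulAut G) (a : G),
          (∀ x : G, (ψ : Equiv.Perm G) x = φ x * a) → q ψ = φ) ∧
        (∀ ψ : nAryAut n (derOp n θ 1),
          ψ ∈ q.ker ↔ ∃ a : G, a ∈ S ∧ ∀ x : G, (ψ : Equiv.Perm G) x = x * a) ∧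
        Function.Injective (QuotientGroup.kerLift q) := by
  obtain ⟨k, rfl⟩ : ∃ k, n = k + 2 := ⟨n - 2, by omega⟩
  have hθ1 : θ ^ (k + 1) = 1 := by simpa using hθ
  have hcen : ∀ (j : ℕ) (a : G), a ∈ Subgroup.center G → (θ ^ j) a ∈ Subgroup.center G := by
    intro j a ha
    rw [Subgroup.mem_center_iff] at ha ⊢
    intro g
    have := congrArg (θ ^ j) (ha ((θ ^ j).symm g))
    simpa [map_mul] using this
  set E : G → G := fun a => (List.ofFn fun i : Fin (k+2) => (θ ^ (i : ℕ)) a).prod with hE_def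
  have hEmul : ∀ a b : G, b ∈ Subgroup.center G → E (a * b) = E a * E b := by
    intro a b hb
    have h1 : (fun i : Fin (k+2) => (θ ^ (i : ℕ)) (a * b))
        = fun i : Fin (k+2) => (θ ^ (i : ℕ)) a * (θ ^ (i : ℕ)) b := by
      funext i; exact map_mul _ _ _
    rw [hE_def]
    simp only [h1]
    exact ofFn_prod_mul_central _ _ (fun i => hcen _ _ hb)
  have hE1 : E 1 = 1 := by simp [hE_def]
  have hderE : ∀ a : G, derOp (k+2) θ 1 (fun _ : Fin (k+2) => a) = E a := fun a => mul_one _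
  refine ⟨{ carrier := {a | a ∈ Subgroup.center G ∧ E a = a}
            one_mem' := ⟨Subgroup.one_mem _, hE1⟩
            mul_mem' := ?_
            inv_mem' := ?_ }, ?_, ?_⟩
  · rintro a b ⟨ha, hEa⟩ ⟨hb, hEb⟩
    exact ⟨Subgroup.mul_mem _ ha hb, by rw [hEmul a b hb, hEa, hEb]⟩
  · rintro a ⟨ha, hEa⟩
    refine ⟨Subgroup.inv_mem _ ha, ?_⟩
    have h := hEmul a a⁻¹ (Subgroup.inv_mem _ ha)
    rw [mul_inv_cancel, hE1, hEa] at h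
    exact (inv_eq_of_mul_eq_one_right h.symm).symm
  · intro a
    rw [hderE]
    exact Iff.rfl
  · -- construct q
    have hmem : ∀ ψ : nAryAut (k+2) (derOp (k+2) θ 1), ∀ x : Fin (k+2) → G,
        (ψ : Equiv.Perm G) (derOp (k+2) θ 1 x)
          = derOp (k+2) θ 1 fun i => (ψ : Equiv.Perm G) (x i) := fun ψ => ψ.2
    have hkey : ∀ ψ : nAryAut (k+2) (derOp (k+2) θ 1), ∀ x y : G,
        (ψ : Equiv.Perm G) (x * y)
          = (ψ : Equiv.Perm G) x * ((ψ : Equiv.Perm G) 1)⁻¹ * (ψ : Equiv.Perm G) y :=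
      fun ψ => key_mul k θ hθ1 (ψ : Equiv.Perm G) (hmem ψ)
    have hinv : ∀ ψ : nAryAut (k+2) (derOp (k+2) θ 1), ∀ w : G,
        (ψ : Equiv.Perm G) w⁻¹
          = (ψ : Equiv.Perm G) 1 * ((ψ : Equiv.Perm G) w)⁻¹ * (ψ : Equiv.Perm G) 1 := by
      intro ψ w
      have key2 := hkey ψ w w⁻¹
      rw [mul_inv_cancel] at key2
      calc (ψ : Equiv.Perm G) w⁻¹
          = ((ψ : Equiv.Perm G) w * ((ψ : Equiv.Perm G) 1)⁻¹)⁻¹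
            * ((ψ : Equiv.Perm G) w * ((ψ : Equiv.Perm G) 1)⁻¹ * (ψ : Equiv.Perm G) w⁻¹) := by
            group
        _ = ((ψ : Equiv.Perm G) w * ((ψ : Equiv.Perm G) 1)⁻¹)⁻¹ * (ψ : Equiv.Perm G) 1 := by
            rw [← key2]
        _ = (ψ : Equiv.Perm G) 1 * ((ψ : Equiv.Perm G) w)⁻¹ * (ψ : Equiv.Perm G) 1 := by
            group
    set Φ : nAryAut (k+2) (derOp (k+2) θ 1) → MulAut G := fun ψ =>
      { toFun := fun x => (ψ : Equiv.Perm G) x * ((ψ : Equiv.Perm G) 1)⁻¹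
        invFun := fun y => (ψ : Equiv.Perm G).symm (y * (ψ : Equiv.Perm G) 1)
        left_inv := fun x => by simp [mul_assoc]
        right_inv := fun y => by simp
        map_mul' := fun x y => by
          rw [hkey ψ x y]
          group } with hΦ_def
    have hΦapp : ∀ ψ x, Φ ψ x = (ψ : Equiv.Perm G) x * ((ψ : Equiv.Perm G) 1)⁻¹ :=
      fun ψ x => rfl
    have hΦmul : ∀ ψ χ, Φ (ψ * χ) = Φ ψ * Φ χ := by
      intro ψ χ
      ext x
      rw [MulAut.mul_apply, hΦapp, hΦapp, hΦapp]
      have h1 : ((ψ * χ : nAryAut (k+2) (derOp (k+2) θ 1)) : Equiv.Perm G)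
          = (ψ : Equiv.Perm G) * (χ : Equiv.Perm G) := rfl
      rw [h1]
      simp only [Equiv.Perm.mul_apply]
      rw [hkey ψ ((χ : Equiv.Perm G) x) (((χ : Equiv.Perm G) 1)⁻¹), hinv ψ]
      group
    refine ⟨MonoidHom.mk' Φ hΦmul, ?_, ?_, ?_⟩
    · intro ψ φ a h
      ext x
      rw [MonoidHom.mk'_apply, hΦapp]
      rw [h x, h 1, map_one, one_mul, mul_inv_cancel_right]
    · intro ψ
      rw [MonoidHom.mem_ker]
      constructor
      · intro hk
        have hRa : ∀ x : G, (ψ : Equiv.Perm G) x = x * (ψ : Equiv.Perm G) 1 := by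
          intro x
          have h := congrArg (fun e : MulAut G => e x) hk
          simp only [MonoidHom.mk'_apply] at h
          rw [hΦapp] at h
          have h2 : (ψ : Equiv.Perm G) x * ((ψ : Equiv.Perm G) 1)⁻¹ = x := by
            simpa using h
          rwa [mul_inv_eq_iff_eq_mul] at h2
        refine ⟨(ψ : Equiv.Perm G) 1, ⟨?_, ?_⟩, hRa⟩
        · exact key_central k θ (ψ : Equiv.Perm G) (hmem ψ) _ hRa
        · have hC := caux_star k θ (ψ : Equiv.Perm G) (hmem ψ)
          have hsplit := derOp_split k θ (fun _ : Fin (k+2) => (ψ : Equiv.Perm G) 1)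
          rw [hderE] at hsplit
          rw [hsplit, hC, mul_one]
      · rintro ⟨a, ⟨hacen, hEa⟩, hRa⟩
        ext x
        rw [MonoidHom.mk'_apply, hΦapp]
        rw [hRa x, hRa 1, one_mul, mul_inv_cancel_right]
        rfl
    · exact QuotientGroup.kerLift_injective _
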